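/- Let n ∈ ℕ, let u : ℝ → Mₙ(ℝ) be continuous, and let γ : ℝ → Mₙ(ℝ) satisfy: γ(t) is invertible for every t and HasDerivAt γ (γ(t)*u(t)) t for every t ∈ ℝ. Let λ : ℝ → (Mₙ(ℝ) →ₗ[ℝ] ℝ) be a family of linear functionals. Define ρ(t)(X) := λ(t)(X*γ(t)) and η(t)(X) := λ(t)(γ(t)*X). Then ρ is a constant function of t if and only if for every t ∈ ℝ and every X ∈ Mₙ(ℝ), the function s ↦ η(s)(X) has derivative η(t)(u(t)*X − X*u(t)) at t. -/

import Mathlib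

attribute [local instance] Matrix.normedAddCommGroup Matrix.normedSpace

variable {n : ℕ}


theorem hasDerivAt_matrix {f : ℝ → Matrix (Fin n) (Fin n) ℝ}
    {f' : Matrix (Fin n) (Fin n) ℝ} {t : ℝ} :
    HasDerivAt f f' t ↔ ∀ i j, HasDerivAt (fun s => f s i j) (f' i j) t := by
  refine hasDerivAt_pi.trans (forall_congr' fun i => ?_)
  exact hasDerivAt_pi

theorem HasDerivAt.matmul {A B : ℝ → Matrix (Fin n) (Fin n) ℝ}
    {A' B' : Matrix (Fin n) (Fin n) ℝ} {t : ℝ}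
    (hA : HasDerivAt A A' t) (hB : HasDerivAt B B' t) :
    HasDerivAt (fun s => A s * B s) (A' * B t + A t * B') t := by
  rw [hasDerivAt_matrix] at *
  intro i j
  have key : ∀ s, (A s * B s) i j = ∑ k, A s i k * B s k j := fun s => Matrix.mul_apply
  simp only [key]
  have h : HasDerivAt (fun s => ∑ k, A s i k * B s k j)
      (∑ k, (A' i k * B t k j + A t i k * B' k j)) t :=
    HasDerivAt.fun_sum (fun k _ => (hA i k).mul (hB k j))
  convert h using 1
  simp [Matrix.add_apply, Matrix.mul_apply, Finset.sum_add_distrib]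

theorem HasDerivAt.linapp (L : Matrix (Fin n) (Fin n) ℝ →ₗ[ℝ] ℝ)
    {m : ℝ → Matrix (Fin n) (Fin n) ℝ} {m' : Matrix (Fin n) (Fin n) ℝ} {t : ℝ}
    (hm : HasDerivAt m m' t) :
    HasDerivAt (fun s => L (m s)) (L m') t := by
  have := (LinearMap.toContinuousLinearMap L).hasFDerivAt.comp_hasDerivAt t hm
  exact this

theorem inv_hasDerivAt {u γ : ℝ → Matrix (Fin n) (Fin n) ℝ}
    (hγinv : ∀ t : ℝ, IsUnit (γ t))
    (hγ' : ∀ t : ℝ, HasDerivAt γ (γ t * u t) t) (t : ℝ) :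
    HasDerivAt (fun s => (γ s)⁻¹) (-(u t * (γ t)⁻¹)) t := by
  have hγc : Continuous γ := by
    rw [continuous_iff_continuousAt]; exact fun s => (hγ' s).continuousAt
  have hdet : ∀ s, IsUnit (γ s).det := fun s => (Matrix.isUnit_iff_isUnit_det _).1 (hγinv s)
  have hinv_mul : ∀ s, (γ s)⁻¹ * γ s = 1 := fun s => Matrix.nonsing_inv_mul _ (hdet s)
  have hmul_inv : ∀ s, γ s * (γ s)⁻¹ = 1 := fun s => Matrix.mul_nonsing_inv _ (hdet s)
  have hιc : ContinuousAt (fun s => (γ s)⁻¹) t := by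
    refine (continuousAt_matrix_inv (γ t) ?_).comp hγc.continuousAt
    have : ContinuousAt (Inv.inv : ℝ → ℝ) (γ t).det := continuousAt_inv₀ (hdet t).ne_zero
    simpa [Ring.inverse_eq_inv'] using this
  refine hasDerivAt_iff_tendsto_slope.2 ?_
  have hslope : ∀ s ∈ ({t}ᶜ : Set ℝ), slope (fun s => (γ s)⁻¹) t s
      = -((γ s)⁻¹ * slope γ t s * (γ t)⁻¹) := by
    intro s _
    simp only [slope_def_field, slope, vsub_eq_sub]
    have key : (γ s)⁻¹ - (γ t)⁻¹ = -((γ s)⁻¹ * (γ s - γ t) * (γ t)⁻¹) := by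
      rw [Matrix.mul_sub, hinv_mul s, Matrix.sub_mul, Matrix.one_mul, Matrix.mul_assoc,
        hmul_inv t, mul_one, neg_sub]
    rw [key]
    rw [Matrix.mul_smul, Matrix.smul_mul, smul_neg]
  refine Filter.Tendsto.congr' (f₁ := fun s => -((γ s)⁻¹ * slope γ t s * (γ t)⁻¹)) ?_ ?_
  · exact (Filter.eventuallyEq_of_mem self_mem_nhdsWithin fun s hs => (hslope s hs).symm)
  have h1 : Filter.Tendsto (fun s => (γ s)⁻¹) (nhdsWithin t {t}ᶜ) (nhds ((γ t)⁻¹)) :=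
    hιc.continuousWithinAt.tendsto
  have h2 : Filter.Tendsto (slope γ t) (nhdsWithin t {t}ᶜ) (nhds (γ t * u t)) :=
    hasDerivAt_iff_tendsto_slope.1 (hγ' t)
  have h3 := ((h1.mul h2).mul (tendsto_const_nhds (x := (γ t)⁻¹))).neg
  convert h3 using 2
  · rfl
  rw [← Matrix.mul_assoc, hinv_mul t, Matrix.one_mul]

theorem sum_entries_linear (T : Matrix (Fin n) (Fin n) ℝ →ₗ[ℝ] ℝ)
    (A : Matrix (Fin n) (Fin n) ℝ) :
    ∑ i, ∑ j, A i j * T (Matrix.single i j 1) = T A := by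
  conv_rhs => rw [Matrix.matrix_eq_sum_single A]
  rw [map_sum]
  refine Finset.sum_congr rfl fun i _ => ?_
  rw [map_sum]
  refine Finset.sum_congr rfl fun j _ => ?_
  have : Matrix.single i j (A i j) = A i j • Matrix.single i j (1:ℝ) := by
    rw [Matrix.smul_single, smul_eq_mul, mul_one]
  rw [this, map_smul, smul_eq_mul]



/-- Equivalence of the right-invariant and left-invariant descriptions of a one-form along a
horizontal curve, in matrix coordinates: with `ρ(t)(X) = λ(t)(X·γ(t))` and
`η(t)(X) = λ(t)(γ(t)·X)`, the function `ρ` is constant in `t` if and only if `η` solves the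
adjoint equation `dη/dt = (ad_{u(t)})* η`. -/
theorem sard_left_right_trivialization (n : ℕ) (u γ : ℝ → Matrix (Fin n) (Fin n) ℝ)
    (hu : Continuous u) (hγinv : ∀ t : ℝ, IsUnit (γ t))
    (hγ' : ∀ t : ℝ, HasDerivAt γ (γ t * u t) t)
    (lam : ℝ → (Matrix (Fin n) (Fin n) ℝ →ₗ[ℝ] ℝ)) :
    (∀ s t : ℝ, ∀ X : Matrix (Fin n) (Fin n) ℝ, lam s (X * γ s) = lam t (X * γ t)) ↔
      (∀ (t : ℝ) (X : Matrix (Fin n) (Fin n) ℝ),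
        HasDerivAt (fun s : ℝ => lam s (γ s * X))
          (lam t (γ t * (u t * X - X * u t))) t) := by
  have hdet : ∀ s, IsUnit (γ s).det := fun s => (Matrix.isUnit_iff_isUnit_det _).1 (hγinv s)
  have hinv_mul : ∀ s, (γ s)⁻¹ * γ s = 1 := fun s => Matrix.nonsing_inv_mul _ (hdet s)
  have hmul_inv : ∀ s, γ s * (γ s)⁻¹ = 1 := fun s => Matrix.mul_nonsing_inv _ (hdet s)
  have hι : ∀ t, HasDerivAt (fun s => (γ s)⁻¹) (-(u t * (γ t)⁻¹)) t :=
    inv_hasDerivAt hγinv hγ'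
  constructor
  · -- ρ constant → adjoint equation
    intro h t X
    set L : Matrix (Fin n) (Fin n) ℝ →ₗ[ℝ] ℝ :=
      (lam t).comp (LinearMap.mulRight ℝ (γ t)) with hL
    have hm : HasDerivAt (fun s => γ s * X * (γ s)⁻¹)
        ((γ t * u t * X + γ t * 0) * (γ t)⁻¹ + γ t * X * -(u t * (γ t)⁻¹)) t :=
      ((hγ' t).matmul (hasDerivAt_const t X)).matmul (hι t)
    have hd := hm.linapp L
    have heq : ∀ s, L (γ s * X * (γ s)⁻¹) = lam s (γ s * X) := by
      intro s
      have := h s t (γ s * X * (γ s)⁻¹)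
      simp only [hL, LinearMap.comp_apply, LinearMap.mulRight_apply]
      rw [← this, Matrix.mul_assoc (γ s * X), hinv_mul s, mul_one]
    have hd2 : HasDerivAt (fun s : ℝ => lam s (γ s * X))
        (L ((γ t * u t * X + γ t * 0) * (γ t)⁻¹ + γ t * X * -(u t * (γ t)⁻¹))) t :=
      hd.congr_of_eventuallyEq (Filter.Eventually.of_forall fun s => (heq s).symm)
    have veq : L ((γ t * u t * X + γ t * 0) * (γ t)⁻¹ + γ t * X * -(u t * (γ t)⁻¹))
        = lam t (γ t * (u t * X - X * u t)) := by
      simp only [hL, LinearMap.comp_apply, LinearMap.mulRight_apply]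
      congr 1
      rw [Matrix.mul_sub]
      simp only [mul_zero, add_zero, Matrix.add_mul, Matrix.mul_neg, Matrix.neg_mul]
      rw [Matrix.mul_assoc (γ t * u t * X), hinv_mul, mul_one]
      rw [Matrix.mul_assoc (γ t * X) (u t * (γ t)⁻¹), Matrix.mul_assoc (u t), hinv_mul, mul_one]
      simp only [Matrix.mul_assoc, Matrix.mul_sub]
      abel
    exact veq ▸ hd2
  · -- adjoint equation → ρ constant
    intro h s t X
    have key : ∀ r : ℝ, HasDerivAt (fun τ => lam τ (X * γ τ)) 0 r := by
      intro r
      set c : ℝ → Matrix (Fin n) (Fin n) ℝ := fun τ => (γ τ)⁻¹ * X * γ τ with hcdef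
      set c' : Matrix (Fin n) (Fin n) ℝ :=
        (-(u r * (γ r)⁻¹) * X + (γ r)⁻¹ * 0) * γ r + (γ r)⁻¹ * X * (γ r * u r) with hc'def
      have hc : HasDerivAt c c' r := ((hι r).matmul (hasDerivAt_const r X)).matmul (hγ' r)
      have hce := hasDerivAt_matrix.1 hc
      -- the function equals a finite sum
      have heq : ∀ τ : ℝ, lam τ (X * γ τ)
          = ∑ i, ∑ j, c τ i j * lam τ (γ τ * Matrix.single i j 1) := by
        intro τ
        have := sum_entries_linear ((lam τ).comp (LinearMap.mulLeft ℝ (γ τ))) (c τ)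
        simp only [LinearMap.comp_apply, LinearMap.mulLeft_apply] at this
        rw [this, hcdef]
        rw [← Matrix.mul_assoc, ← Matrix.mul_assoc, hmul_inv τ, Matrix.one_mul]
      have hsum : HasDerivAt
          (fun τ => ∑ i, ∑ j, c τ i j * lam τ (γ τ * Matrix.single i j 1))
          (∑ i, ∑ j, (c' i j * lam r (γ r * Matrix.single i j 1)
            + c r i j * lam r (γ r * (u r * Matrix.single i j 1
              - Matrix.single i j 1 * u r)))) r := by
        refine HasDerivAt.fun_sum fun i _ => HasDerivAt.fun_sum fun j _ => ?_
        exact (hce i j).mul (h r (Matrix.single i j 1))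
      have hzero : (∑ i, ∑ j, (c' i j * lam r (γ r * Matrix.single i j 1)
            + c r i j * lam r (γ r * (u r * Matrix.single i j 1
              - Matrix.single i j 1 * u r)))) = 0 := by
        have split : ∀ i : Fin n, ∑ j, (c' i j * lam r (γ r * Matrix.single i j 1)
            + c r i j * lam r (γ r * (u r * Matrix.single i j 1
              - Matrix.single i j 1 * u r)))
            = (∑ j, c' i j * lam r (γ r * Matrix.single i j 1))
            + ∑ j, c r i j * lam r (γ r * (u r * Matrix.single i j 1
              - Matrix.single i j 1 * u r)) := fun i => Finset.sum_add_distrib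
        simp only [split, Finset.sum_add_distrib]
        have e1 := sum_entries_linear ((lam r).comp (LinearMap.mulLeft ℝ (γ r))) c'
        have e2 := sum_entries_linear ((lam r).comp ((LinearMap.mulLeft ℝ (γ r)).comp
          (LinearMap.mulLeft ℝ (u r) - LinearMap.mulRight ℝ (u r)))) (c r)
        simp only [LinearMap.comp_apply, LinearMap.mulLeft_apply, LinearMap.sub_apply,
          LinearMap.mulRight_apply] at e1 e2
        rw [e1, e2, ← map_add, ← Matrix.mul_add]
        have hc'' : c' = c r * u r - u r * c r := by
          rw [hc'def, hcdef]
          simp only [mul_zero, add_zero, Matrix.neg_mul, Matrix.add_mul, Matrix.mul_assoc]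
          abel
        have hzero2 : c' + (u r * c r - c r * u r) = 0 := by rw [hc'']; abel
        rw [hzero2, Matrix.mul_zero, map_zero]
      rw [← hzero]
      exact hsum.congr_of_eventuallyEq (Filter.Eventually.of_forall fun τ => heq τ)
    have hdiff : Differentiable ℝ (fun τ => lam τ (X * γ τ)) := fun r => (key r).differentiableAt
    have hderiv : ∀ r, deriv (fun τ => lam τ (X * γ τ)) r = 0 := fun r => (key r).deriv
    exact is_const_of_deriv_eq_zero hdiff hderiv s t
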